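/- Let n ≥ 1, let φ : ℝ → ℝⁿ be continuous, and let ξ ∈ ℝⁿ, α, β, I ∈ ℝ, δ > 0 be such that ξ·φ(λ) = αλ + β for all λ ∈ [I − δ, I + δ]. Define u(t, x) = I + δ sin(2π(ξ·x − α t)) for (t, x) ∈ Π = (0, ∞) × ℝⁿ. Then u is an entropy solution of u_t + div_x φ(u) = 0 on Π: for every k ∈ ℝ and every nonnegative C¹ function f with compact support contained in Π, ∫_Π ( |u − k| ∂_t f + sgn(u − k) (φ(u) − φ(k))·∇_x f ) dt dx ≥ 0. -/

import Mathlib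

open MeasureTheory Filter


instance volAddRightInv (n : ℕ) :
    Measure.IsAddRightInvariant (volume : Measure (ℝ × (Fin n → ℝ))) := by
  haveI h : Measure.IsAddLeftInvariant (volume : Measure (ℝ × (Fin n → ℝ))) :=
    (by infer_instance : Measure.IsAddLeftInvariant ((volume : Measure ℝ).prod volume))
  constructor
  intro g
  simp_rw [show (· + g) = (g + ·) from funext fun x => add_comm x g]
  exact h.map_add_left_eq_self g

lemma aux_integrable {n : ℕ} (L : ℝ × (Fin n → ℝ) → ℝ) (hL : Continuous L)
    (a : ℝ → ℝ) (ha : Measurable a) (M : ℝ) (haM : ∀ s, |a s| ≤ M)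
    (f : ℝ × (Fin n → ℝ) → ℝ) (hf : ContDiff ℝ 1 f) (hsupp : HasCompactSupport f)
    (v : ℝ × (Fin n → ℝ)) :
    Integrable (fun z => a (L z) * fderiv ℝ f z v) := by
  have hDf : Continuous (fun z => fderiv ℝ f z v) :=
    (hf.continuous_fderiv one_ne_zero).clm_apply continuous_const
  have hcs : HasCompactSupport (fun z => fderiv ℝ f z v) :=
    (hsupp.fderiv ℝ).comp_left (g := fun T : (ℝ × (Fin n → ℝ)) →L[ℝ] ℝ => T v) rfl
  exact (hDf.integrable_of_hasCompactSupport hcs).bdd_mul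
    ((ha.comp hL.measurable)).aestronglyMeasurable
    (c := M) (ae_of_all _ fun z => by simpa [Real.norm_eq_abs] using haM (L z))

lemma aux_key {n : ℕ} (L : ℝ × (Fin n → ℝ) → ℝ) (hL : Continuous L)
    (a : ℝ → ℝ) (ha : Measurable a) (M : ℝ) (haM : ∀ s, |a s| ≤ M)
    (f : ℝ × (Fin n → ℝ) → ℝ) (hf : ContDiff ℝ 1 f) (hsupp : HasCompactSupport f)
    (v : ℝ × (Fin n → ℝ)) (hinv : ∀ (z : ℝ × (Fin n → ℝ)) (r : ℝ), a (L (z + r • v)) = a (L z)) :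
    ∫ z, a (L z) * fderiv ℝ f z v = 0 := by
  obtain ⟨C, hC⟩ := hf.lipschitzWith_of_hasCompactSupport hsupp one_ne_zero
  have hM0 : 0 ≤ M := le_trans (abs_nonneg _) (haM 0)
  set K : Set (ℝ × (Fin n → ℝ)) := Metric.cthickening ‖v‖ (tsupport f) with hK
  have hKcomp : IsCompact K := IsCompact.cthickening hsupp
  have h_int : ∀ c : ℝ × (Fin n → ℝ), Integrable (fun z => a (L z) * f (z + c)) := by
    intro c
    have h1 : Continuous (fun z => f (z + c)) :=
      hf.continuous.comp (continuous_id.add continuous_const)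
    have h2 : HasCompactSupport (fun z => f (z + c)) :=
      hsupp.comp_homeomorph (Homeomorph.addRight c)
    exact (h1.integrable_of_hasCompactSupport h2).bdd_mul
      (ha.comp hL.measurable).aestronglyMeasurable
      (c := M) (ae_of_all _ fun z => by simpa [Real.norm_eq_abs] using haM (L z))
  have hF : ∀ r : ℝ, ∫ z, a (L z) * f (z + r • v) = ∫ z, a (L z) * f z := by
    intro r
    calc ∫ z, a (L z) * f (z + r • v)
        = ∫ z, (fun w => a (L w) * f w) (z + r • v) := by
          congr 1; funext z; simp only; rw [hinv z r]
      _ = ∫ w, a (L w) * f w := integral_add_right_eq_self (μ := volume) (fun w => a (L w) * f w) (r • v)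
  have hzero : ∀ r : ℝ, r ≠ 0 → (∫ z, a (L z) * ((f (z + r • v) - f z) / r)) = 0 := by
    intro r hr
    have heq : (fun z => a (L z) * ((f (z + r • v) - f z) / r))
        = fun z => (a (L z) * f (z + r • v) - a (L z) * f z) / r := by
      funext z; ring
    rw [heq, integral_div, integral_sub (h_int (r • v)) (by simpa using h_int 0), hF r,
      sub_self, zero_div]
  have hlim : Tendsto (fun r : ℝ => ∫ z, a (L z) * ((f (z + r • v) - f z) / r))
      (nhdsWithin (0:ℝ) {(0:ℝ)}ᶜ) (nhds (∫ z, a (L z) * fderiv ℝ f z v)) := by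
    apply tendsto_integral_filter_of_dominated_convergence
        (K.indicator fun _ => M * (C * ‖v‖))
    · filter_upwards with r
      exact ((ha.comp hL.measurable).aestronglyMeasurable.mul
        (((hf.continuous.comp (continuous_id.add continuous_const)).sub
          hf.continuous).div_const r).aestronglyMeasurable)
    · have hball : Metric.ball (0:ℝ) 1 ∈ nhdsWithin (0:ℝ) {(0:ℝ)}ᶜ :=
        nhdsWithin_le_nhds (Metric.ball_mem_nhds 0 one_pos)
      filter_upwards [hball, self_mem_nhdsWithin] with r hr1 hr0
      refine ae_of_all _ fun z => ?_
      have hrne : r ≠ 0 := hr0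
      have hrabs : |r| < 1 := by simpa [Real.dist_eq] using hr1
      by_cases hz : z ∈ K
      · rw [Set.indicator_of_mem hz]
        have h1 : |a (L z)| ≤ M := haM _
        have h2 : |f (z + r • v) - f z| ≤ C * (|r| * ‖v‖) := by
          have := hC.dist_le_mul (z + r • v) z
          simpa [Real.dist_eq, dist_eq_norm, norm_smul] using this
        have hrpos : 0 < |r| := abs_pos.mpr hrne
        calc ‖a (L z) * ((f (z + r • v) - f z) / r)‖
            = |a (L z)| * (|f (z + r • v) - f z| / |r|) := by
              rw [Real.norm_eq_abs, abs_mul, abs_div]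
          _ ≤ M * ((C * (|r| * ‖v‖)) / |r|) := by gcongr
          _ = M * (C * ‖v‖) := by field_simp
      · rw [Set.indicator_of_notMem hz]
        have hz1 : f z = 0 := by
          apply image_eq_zero_of_notMem_tsupport
          intro hmem
          exact hz (Metric.self_subset_cthickening _ hmem)
        have hz2 : f (z + r • v) = 0 := by
          apply image_eq_zero_of_notMem_tsupport
          intro hmem
          apply hz
          apply Metric.mem_cthickening_of_dist_le z (z + r • v) _ _ hmem
          have hd : dist z (z + r • v) = |r| * ‖v‖ := by
            simp [dist_eq_norm, norm_smul]
          rw [hd]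
          nlinarith [norm_nonneg v, abs_nonneg r]
        simp [hz1, hz2]
    · exact (integrableOn_const hKcomp.measure_lt_top.ne).integrable_indicator
        hKcomp.measurableSet
    · refine ae_of_all _ fun z => ?_
      have h1 : HasFDerivAt f (fderiv ℝ f z) (z + (0:ℝ) • v) := by
        simpa using (hf.differentiable one_ne_zero z).hasFDerivAt
      have h2 : HasDerivAt (fun r : ℝ => z + r • v) v 0 := by
        simpa using ((hasDerivAt_id (0:ℝ)).smul_const v).const_add z
      have hd : HasDerivAt (fun r : ℝ => f (z + r • v)) (fderiv ℝ f z v) 0 :=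
        h1.comp_hasDerivAt 0 h2
      have hslope := hasDerivAt_iff_tendsto_slope.mp hd
      have heq : ∀ r : ℝ, slope (fun r : ℝ => f (z + r • v)) 0 r = (f (z + r • v) - f z) / r := by
        intro r; rw [slope_def_field]; simp
      exact Tendsto.const_mul (a (L z)) ((tendsto_congr heq).mp hslope)
  have he : (fun r : ℝ => ∫ z, a (L z) * ((f (z + r • v) - f z) / r))
      =ᶠ[nhdsWithin (0:ℝ) {(0:ℝ)}ᶜ] fun _ => (0:ℝ) := by
    filter_upwards [self_mem_nhdsWithin] with r hr using hzero r hr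
  have := hlim.congr' he
  exact tendsto_nhds_unique this tendsto_const_nhds

lemma aux_sign_meas : Measurable Real.sign := by
  have h : Real.sign = fun r : ℝ => if r < 0 then (-1:ℝ) else if 0 < r then 1 else 0 := rfl
  rw [h]
  exact Measurable.ite (measurableSet_lt measurable_id measurable_const) measurable_const
    (Measurable.ite (measurableSet_lt measurable_const measurable_id) measurable_const
      measurable_const)

lemma aux_sign_abs_le (x : ℝ) : |Real.sign x| ≤ 1 := by
  rcases lt_trichotomy x 0 with h | h | h
  · rw [Real.sign_of_neg h]; norm_num
  · simp [h]
  · rw [Real.sign_of_pos h]; norm_num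

lemma aux_abs_eq_sign_mul (x : ℝ) : |x| = Real.sign x * x := by
  rcases lt_trichotomy x 0 with h | h | h
  · rw [Real.sign_of_neg h, abs_of_neg h]; ring
  · simp [h]
  · rw [Real.sign_of_pos h, abs_of_pos h]; ring



open MeasureTheory

/-- A bounded measurable `u` on `Π = (0,∞) × ℝⁿ` is an entropy solution of
`u_t + div_x φ(u) = 0` if for every `k ∈ ℝ` and every nonnegative `C¹` function `f`
compactly supported in `Π`,
`∫_Π (|u−k| ∂_t f + sgn(u−k) (φ(u)−φ(k))·∇_x f) ≥ 0`.
Here `∂_t f (z) = Df(z)(1,0)` and `(φ(u)−φ(k))·∇_x f (z) = Df(z)(0, φ(u(z))−φ(k))`. -/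
def IsEntropySolution (n : ℕ) (φ : ℝ → Fin n → ℝ) (u : ℝ × (Fin n → ℝ) → ℝ) : Prop :=
  ∀ k : ℝ, ∀ f : ℝ × (Fin n → ℝ) → ℝ, ContDiff ℝ 1 f → HasCompactSupport f →
    tsupport f ⊆ Set.Ioi (0 : ℝ) ×ˢ Set.univ → (∀ z, 0 ≤ f z) →
    0 ≤ ∫ z in Set.Ioi (0 : ℝ) ×ˢ (Set.univ : Set (Fin n → ℝ)),
        (|u z - k| * fderiv ℝ f z (1, 0) +
          Real.sign (u z - k) * fderiv ℝ f z (0, fun i => φ (u z) i - φ k i))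

/-- If `ξ·φ(λ) = αλ + β` on `[I−δ, I+δ]`, then
`u(t,x) = I + δ sin(2π(ξ·x − αt))` is an entropy solution of `u_t + div_x φ(u) = 0`
on `Π = (0,∞) × ℝⁿ`. -/
theorem travelling_wave_is_entropy_solution
    (n : ℕ) (hn : 1 ≤ n) (φ : ℝ → Fin n → ℝ) (hφ : Continuous φ)
    (ξ : Fin n → ℝ) (α β I δ : ℝ) (hδ : 0 < δ)
    (haff : ∀ l ∈ Set.Icc (I - δ) (I + δ), ∑ i, ξ i * φ l i = α * l + β)
    (u : ℝ × (Fin n → ℝ) → ℝ)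
    (hu : u = fun z => I + δ * Real.sin (2 * Real.pi * ((∑ i, ξ i * z.2 i) - α * z.1))) :
    IsEntropySolution n φ u := by
  intro k f hf hsupp hsub hpos
  classical
  -- the linear functional
  set L : ℝ × (Fin n → ℝ) → ℝ := fun z => (∑ i, ξ i * z.2 i) - α * z.1 with hLdef
  have hL : Continuous L := by
    apply Continuous.sub
    · exact continuous_finset_sum _ fun i _ =>
        continuous_const.mul ((continuous_apply i).comp continuous_snd)
    · exact continuous_const.mul continuous_fst
  have hLlin : ∀ (z v : ℝ × (Fin n → ℝ)) (r : ℝ), L (z + r • v) = L z + r * L v := by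
    intro z v r
    simp only [hLdef, Prod.fst_add, Prod.snd_add, Prod.smul_fst, Prod.smul_snd, Pi.add_apply,
      Pi.smul_apply, smul_eq_mul]
    rw [Finset.sum_congr rfl (fun i _ => show ξ i * (z.2 i + r * v.2 i)
        = ξ i * z.2 i + r * (ξ i * v.2 i) from by ring),
      Finset.sum_add_distrib, ← Finset.mul_sum]
    ring
  set c : ℝ := ∑ i, ξ i * φ k i with hc
  set g : ℝ → ℝ := fun s => I + δ * Real.sin (2 * Real.pi * s) with hgdef
  have hgc : Continuous g := by
    apply continuous_const.add (continuous_const.mul _)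
    exact Real.continuous_sin.comp (continuous_const.mul continuous_id)
  have hgu : ∀ z, u z = g (L z) := by intro z; rw [hu]
  have hgmem : ∀ s, g s ∈ Set.Icc (I - δ) (I + δ) := by
    intro s
    simp only [hgdef, Set.mem_Icc]
    constructor <;>
      nlinarith [Real.neg_one_le_sin (2 * Real.pi * s), Real.sin_le_one (2 * Real.pi * s)]
  set V : ℝ → ℝ := fun s => |g s - k| with hVdef
  set W : Fin n → ℝ → ℝ := fun i s => Real.sign (g s - k) * (φ (g s) i - φ k i) with hWdef
  -- pointwise identity for the ξ-combination
  have id1 : ∀ s, -(α * V s) + ∑ i, ξ i * W i s = Real.sign (g s - k) * (α * k + β - c) := by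
    intro s
    have h1 : ∑ i, ξ i * W i s
        = Real.sign (g s - k) * ((∑ i, ξ i * φ (g s) i) - c) := by
      rw [hc, ← Finset.sum_sub_distrib, Finset.mul_sum]
      apply Finset.sum_congr rfl
      intro i _
      simp only [hWdef]
      ring
    rw [h1, haff (g s) (hgmem s)]
    have h2 : V s = Real.sign (g s - k) * (g s - k) := aux_abs_eq_sign_mul _
    rw [h2]
    ring
  -- the auxiliary vector v₀
  have hv0 : ∃ v₀ : ℝ × (Fin n → ℝ), (∀ vv, L vv * L v₀ = L vv) ∧
      (L v₀ = 1 ∨ α * k + β - c = 0) := by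
    by_cases hα : α = 0
    · by_cases hξ : ∀ i, ξ i = 0
      · have hL0 : ∀ vv, L vv = 0 := by
          intro vv
          simp [hLdef, hα, hξ]
        have hβ : β = 0 := by
          have h := haff I ⟨by linarith, by linarith⟩
          simp only [hξ, zero_mul, Finset.sum_const_zero, hα] at h
          linarith
        refine ⟨0, fun vv => ?_, Or.inr ?_⟩
        · rw [hL0 0, mul_zero, hL0 vv]
        · simp [hc, hξ, hα, hβ]
      · push_neg at hξ
        obtain ⟨i, hi⟩ := hξ
        have h1 : L (0, Pi.single i (ξ i)⁻¹) = 1 := by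
          simp only [hLdef, Prod.snd, Prod.fst, mul_zero, sub_zero]
          rw [Finset.sum_eq_single i]
          · rw [Pi.single_eq_same]; field_simp
          · intro j _ hj; rw [Pi.single_eq_of_ne hj, mul_zero]
          · intro h; exact absurd (Finset.mem_univ i) h
        exact ⟨(0, Pi.single i (ξ i)⁻¹), fun vv => by rw [h1, mul_one], Or.inl h1⟩
    · have h1 : L (-α⁻¹, 0) = 1 := by
        simp only [hLdef]
        simp
        field_simp
      exact ⟨(-α⁻¹, 0), fun vv => by rw [h1, mul_one], Or.inl h1⟩
  obtain ⟨v₀, hv₀lin, hv₀alt⟩ := hv0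
  -- the constant C₀
  have hC0 : ∃ C₀ : ℝ, (∀ s, -(α * V s) + ∑ i, ξ i * W i s = C₀) ∧ C₀ * L v₀ = C₀ := by
    by_cases hk0 : α * k + β - c = 0
    · exact ⟨0, fun s => by rw [id1 s, hk0, mul_zero], by rw [zero_mul]⟩
    · have hLv1 : L v₀ = 1 := hv₀alt.resolve_right hk0
      have hknot : k < I - δ ∨ I + δ < k := by
        by_contra hcon
        push_neg at hcon
        obtain ⟨h1, h2⟩ := hcon
        have := haff k ⟨h1, h2⟩
        rw [hc] at hk0
        rw [this] at hk0
        exact hk0 (by ring)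
      rcases hknot with hlt | hgt
      · refine ⟨α * k + β - c, fun s => ?_, by rw [hLv1, mul_one]⟩
        rw [id1 s, Real.sign_of_pos (by have := (hgmem s).1; linarith), one_mul]
      · refine ⟨-(α * k + β - c), fun s => ?_, by rw [hLv1, mul_one]⟩
        rw [id1 s, Real.sign_of_neg (by have := (hgmem s).2; linarith)]
        ring
  obtain ⟨C₀, hC₀, hC₀v⟩ := hC0
  -- basis vectors and kernel directions
  set e0 : ℝ × (Fin n → ℝ) := (1, 0) with he0
  set ee : Fin n → ℝ × (Fin n → ℝ) := fun i => (0, Pi.single i 1) with hee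
  have hLe0 : L e0 = -α := by simp [hLdef, he0]
  have hLee : ∀ i, L (ee i) = ξ i := by
    intro i
    simp only [hLdef, hee, mul_zero, sub_zero]
    rw [Finset.sum_eq_single i]
    · rw [Pi.single_eq_same, mul_one]
    · intro j _ hj; rw [Pi.single_eq_of_ne hj, mul_zero]
    · intro h; exact absurd (Finset.mem_univ i) h
  set d0 : ℝ × (Fin n → ℝ) := e0 + (-(L e0)) • v₀ with hd0
  set dd : Fin n → ℝ × (Fin n → ℝ) := fun i => ee i + (-(L (ee i))) • v₀ with hdd
  have hLd0 : L d0 = 0 := by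
    rw [hd0, hLlin]
    have h := hv₀lin e0
    rw [neg_mul, h]
    ring
  have hLdd : ∀ i, L (dd i) = 0 := by
    intro i
    rw [hdd]
    simp only
    rw [hLlin]
    have h := hv₀lin (ee i)
    rw [neg_mul, h]
    ring
  -- splitting the fderiv on the second coordinate
  have hsplit : ∀ (z : ℝ × (Fin n → ℝ)) (w : Fin n → ℝ),
      fderiv ℝ f z ((0:ℝ), w) = ∑ i, w i * fderiv ℝ f z (ee i) := by
    intro z w
    have hw : ((0:ℝ), w) = ∑ i, w i • ee i := by
      apply Prod.ext
      · rw [Prod.fst_sum]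
        simp [hee]
      · rw [Prod.snd_sum]
        have h : ∀ i, (w i • ee i).2 = Pi.single i (w i) := by
          intro i
          simp only [hee]
          rw [Prod.smul_snd, ← Pi.single_smul, smul_eq_mul, mul_one]
        rw [Finset.sum_congr rfl fun i _ => h i, Finset.univ_sum_single]
    rw [hw, map_sum]
    apply Finset.sum_congr rfl
    intro i _
    rw [_root_.map_smul, smul_eq_mul]
  -- the pointwise decomposition of the integrand
  have hpt : ∀ z, |u z - k| * fderiv ℝ f z (1, 0) +
      Real.sign (u z - k) * fderiv ℝ f z (0, fun i => φ (u z) i - φ k i)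
      = V (L z) * fderiv ℝ f z d0 + ∑ i, W i (L z) * fderiv ℝ f z (dd i)
        + C₀ * fderiv ℝ f z v₀ := by
    intro z
    rw [hgu z]
    have hA : |g (L z) - k| * fderiv ℝ f z (1, 0) +
        Real.sign (g (L z) - k) * fderiv ℝ f z (0, fun i => φ (g (L z)) i - φ k i)
        = V (L z) * fderiv ℝ f z e0 + ∑ i, W i (L z) * fderiv ℝ f z (ee i) := by
      rw [hsplit z (fun i => φ (g (L z)) i - φ k i), Finset.mul_sum]
      congr 1
      apply Finset.sum_congr rfl
      intro i _
      simp only [hWdef]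
      ring
    rw [hA]
    have hd0' : fderiv ℝ f z d0 = fderiv ℝ f z e0 + α * fderiv ℝ f z v₀ := by
      rw [hd0, map_add, _root_.map_smul, smul_eq_mul, hLe0, neg_neg]
    have hdd' : ∀ i, W i (L z) * fderiv ℝ f z (dd i)
        = W i (L z) * fderiv ℝ f z (ee i) - (ξ i * W i (L z)) * fderiv ℝ f z v₀ := by
      intro i
      rw [hdd]
      simp only
      rw [map_add, _root_.map_smul, smul_eq_mul, hLee i]
      ring
    rw [hd0', Finset.sum_congr rfl (fun i _ => hdd' i), Finset.sum_sub_distrib,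
      ← Finset.sum_mul]
    have hs := hC₀ (L z)
    linear_combination (fderiv ℝ f z v₀) * hs
  -- measurability and bounds
  have hmV : Measurable V := (continuous_abs.comp (hgc.sub continuous_const)).measurable
  have hbV : ∀ s, |V s| ≤ |I| + δ + |k| := by
    intro s
    have h1 := (hgmem s).1
    have h2 := (hgmem s).2
    rw [hVdef]
    simp only [abs_abs]
    rw [abs_le]
    have h3 := le_abs_self I
    have h4 := neg_abs_le I
    have h5 := le_abs_self k
    have h6 := neg_abs_le k
    constructor <;> linarith
  have hmW : ∀ i, Measurable (W i) := by
    intro i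
    apply Measurable.mul
    · exact aux_sign_meas.comp (hgc.sub continuous_const).measurable
    · exact (((continuous_apply i).comp (hφ.comp hgc)).sub continuous_const).measurable
  have hbW : ∀ i, ∃ M, ∀ s, |W i s| ≤ M := by
    intro i
    obtain ⟨M, hM⟩ := (isCompact_Icc (a := I - δ) (b := I + δ)).exists_bound_of_continuousOn
      (Continuous.continuousOn (((continuous_apply i).comp hφ).sub continuous_const))
    refine ⟨M, fun s => ?_⟩
    have h1 := hM (g s) (hgmem s)
    rw [Real.norm_eq_abs] at h1
    calc |W i s| = |Real.sign (g s - k)| * |φ (g s) i - φ k i| := by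
          rw [hWdef]; exact abs_mul _ _
      _ ≤ 1 * |φ (g s) i - φ k i| := by
          apply mul_le_mul_of_nonneg_right (aux_sign_abs_le _) (abs_nonneg _)
      _ = |φ (g s) i - φ k i| := one_mul _
      _ ≤ M := h1
  -- invariance facts
  have hinvV : ∀ (z : ℝ × (Fin n → ℝ)) (r : ℝ), V (L (z + r • d0)) = V (L z) := by
    intro z r
    rw [hLlin, hLd0, mul_zero, add_zero]
  have hinvW : ∀ i (z : ℝ × (Fin n → ℝ)) (r : ℝ), W i (L (z + r • dd i)) = W i (L z) := by
    intro i z r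
    rw [hLlin, hLdd i, mul_zero, add_zero]
  -- the three integrability facts
  have hintV : Integrable (fun z => V (L z) * fderiv ℝ f z d0) :=
    aux_integrable L hL V hmV _ hbV f hf hsupp d0
  have hintW : ∀ i, Integrable (fun z => W i (L z) * fderiv ℝ f z (dd i)) := by
    intro i
    obtain ⟨M, hM⟩ := hbW i
    exact aux_integrable L hL (W i) (hmW i) M hM f hf hsupp (dd i)
  have hintWs : Integrable (fun z => ∑ i, W i (L z) * fderiv ℝ f z (dd i)) := by
    have := integrable_finset_sum (μ := (volume : Measure (ℝ × (Fin n → ℝ))))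
      (Finset.univ : Finset (Fin n)) (fun i _ => hintW i)
    simpa using this
  have hintC : Integrable (fun z => C₀ * fderiv ℝ f z v₀) :=
    aux_integrable L hL (fun _ => C₀) measurable_const |C₀| (fun s => le_refl _) f hf hsupp v₀
  -- the three vanishing integrals
  have hzV : ∫ z, V (L z) * fderiv ℝ f z d0 = 0 :=
    aux_key L hL V hmV _ hbV f hf hsupp d0 hinvV
  have hzW : ∀ i, ∫ z, W i (L z) * fderiv ℝ f z (dd i) = 0 := by
    intro i
    obtain ⟨M, hM⟩ := hbW i
    exact aux_key L hL (W i) (hmW i) M hM f hf hsupp (dd i) (hinvW i)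
  have hzC : ∫ z, C₀ * fderiv ℝ f z v₀ = 0 := by
    have hC₀0 : C₀ = 0 ∨ L v₀ = 1 := by
      by_cases h : L v₀ = 1
      · exact Or.inr h
      · left
        by_contra hC
        exact h (by field_simp at hC₀v; tauto)
    apply aux_key L hL (fun _ => C₀) measurable_const |C₀| (fun s => le_refl _) f hf hsupp v₀
    intro z r
    rfl
  -- reduce the set integral to the full integral
  have hvanish : ∀ z ∉ (Set.Ioi (0:ℝ) ×ˢ (Set.univ : Set (Fin n → ℝ))),
      (|u z - k| * fderiv ℝ f z (1, 0) +
        Real.sign (u z - k) * fderiv ℝ f z (0, fun i => φ (u z) i - φ k i)) = 0 := by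
    intro z hz
    have hz' : z ∉ tsupport f := fun h => hz (hsub h)
    have hD0 : fderiv ℝ f z = 0 := by
      by_contra hD
      exact hz' (support_fderiv_subset ℝ (Function.mem_support.mpr hD))
    rw [hD0]
    simp
  rw [setIntegral_eq_integral_of_forall_compl_eq_zero hvanish]
  have hfinal : ∫ z, (|u z - k| * fderiv ℝ f z (1, 0) +
      Real.sign (u z - k) * fderiv ℝ f z (0, fun i => φ (u z) i - φ k i)) = 0 := by
    rw [integral_congr_ae (Filter.Eventually.of_forall hpt)]
    have hint12 : Integrable (fun z => V (L z) * fderiv ℝ f z d0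
        + ∑ i, W i (L z) * fderiv ℝ f z (dd i)) := hintV.add hintWs
    rw [integral_add hint12 hintC, integral_add hintV hintWs,
      integral_finset_sum _ (fun i _ => hintW i), hzV, hzC,
      Finset.sum_congr rfl (fun i _ => hzW i)]
    simp
  rw [hfinal]
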